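/- Let f(s) = ∑_{j=0}^N m_j r_j^s be a Dirichlet polynomial with r_0 = 1 > r_1 > ⋯ > r_N > 0 and complex multiplicities with m_0 = 1 (nonzero m_N). Define D_ℓ and D as the unique real solutions of 1 + ∑_{j=1}^{N−1} |m_j| r_j^{D_ℓ} = |m_N| r_N^{D_ℓ} and ∑_{j=1}^{N} |m_j| r_j^{D} = 1, respectively. Then every complex root ω of f satisfies D_ℓ ≤ Re(ω) ≤ D. -/

import Mathlib

open Real Finset

/-- Every complex root of the Dirichlet polynomial `f(s) = 1 + ∑_{j=1}^{N} m_j r_j^s`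
(with `1 > r_1 > ⋯ > r_N > 0`, complex multiplicities, `m_N ≠ 0`) lies in the vertical
strip `D_ℓ ≤ Re(ω) ≤ D`, where `D_ℓ` and `D` are the unique real solutions of
`1 + ∑_{j<N} |m_j| r_j^{D_ℓ} = |m_N| r_N^{D_ℓ}` and `∑_j |m_j| r_j^D = 1`. -/
theorem dirichlet_polynomial_roots_in_strip {n : ℕ}
    (r : Fin (n + 1) → ℝ) (c : Fin (n + 1) → ℂ)
    (hr1 : ∀ j, r j < 1) (hr0 : ∀ j, 0 < r j)
    (hrmono : ∀ i j : Fin (n + 1), i < j → r j < r i)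
    (hcN : c (Fin.last n) ≠ 0)
    (Dl D : ℝ)
    (hDl : 1 + ∑ j ∈ Finset.univ.erase (Fin.last n), ‖c j‖ * r j ^ Dl
            = ‖c (Fin.last n)‖ * r (Fin.last n) ^ Dl)
    (hD : ∑ j, ‖c j‖ * r j ^ D = 1)
    (ω : ℂ) (hω : 1 + ∑ j, c j * (r j : ℂ) ^ ω = 0) :
    Dl ≤ ω.re ∧ ω.re ≤ D := by
  set x := ω.re with hx
  have habs : ∀ j, ‖c j * (r j : ℂ) ^ ω‖ = ‖c j‖ * r j ^ x := by
    intro j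
    rw [norm_mul, Complex.norm_cpow_eq_rpow_re_of_pos (hr0 j)]
  have hcNpos : 0 < ‖c (Fin.last n)‖ := by
    simpa using hcN
  constructor
  · by_contra h
    push_neg at h
    -- h : x < Dl
    have hsplit : ∑ j, c j * (r j : ℂ) ^ ω
        = (∑ j ∈ Finset.univ.erase (Fin.last n), c j * (r j : ℂ) ^ ω)
          + c (Fin.last n) * (r (Fin.last n) : ℂ) ^ ω :=
      (Finset.sum_erase_add _ _ (Finset.mem_univ _)).symm
    have key : c (Fin.last n) * (r (Fin.last n) : ℂ) ^ ω
        = -(1 + ∑ j ∈ Finset.univ.erase (Fin.last n), c j * (r j : ℂ) ^ ω) := by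
      rw [hsplit] at hω; linear_combination hω
    have h1 : ‖c (Fin.last n)‖ * r (Fin.last n) ^ x
        ≤ 1 + ∑ j ∈ Finset.univ.erase (Fin.last n), ‖c j‖ * r j ^ x := by
      rw [← habs, key, norm_neg]
      calc ‖1 + ∑ j ∈ Finset.univ.erase (Fin.last n), c j * (r j:ℂ) ^ ω‖
          ≤ ‖(1:ℂ)‖
            + ‖∑ j ∈ Finset.univ.erase (Fin.last n), c j * (r j:ℂ) ^ ω‖ :=
            norm_add_le _ _
        _ ≤ 1 + ∑ j ∈ Finset.univ.erase (Fin.last n), ‖c j‖ * r j ^ x := by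
            rw [norm_one]
            gcongr
            calc ‖∑ j ∈ Finset.univ.erase (Fin.last n), c j * (r j:ℂ) ^ ω‖
                ≤ ∑ j ∈ Finset.univ.erase (Fin.last n), ‖c j * (r j:ℂ) ^ ω‖ :=
                  norm_sum_le _ _
              _ = _ := by simp_rw [habs]
    have hrN := hr0 (Fin.last n)
    have h2 : 1 + ∑ j ∈ Finset.univ.erase (Fin.last n), ‖c j‖ * r j ^ x
        < ‖c (Fin.last n)‖ * r (Fin.last n) ^ x := by
      have hpow : r (Fin.last n) ^ x = r (Fin.last n) ^ Dl * r (Fin.last n) ^ (x - Dl) := by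
        rw [← Real.rpow_add hrN]; ring_nf
      rw [hpow, ← mul_assoc, ← hDl, add_mul, one_mul, Finset.sum_mul]
      refine add_lt_add_of_lt_of_le ?_ (Finset.sum_le_sum ?_)
      · rw [Real.one_lt_rpow_iff_of_pos hrN]
        exact Or.inr ⟨hr1 _, by linarith⟩
      · intro j hj
        have hjlt : j < Fin.last n :=
          lt_of_le_of_ne (Fin.le_last j) (Finset.ne_of_mem_erase hj)
        have hrj : r (Fin.last n) ≤ r j := (hrmono j (Fin.last n) hjlt).le
        have : r j ^ x ≤ r j ^ Dl * r (Fin.last n) ^ (x - Dl) := by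
          have hpj : r j ^ x = r j ^ Dl * r j ^ (x - Dl) := by
            rw [← Real.rpow_add (hr0 j)]; ring_nf
          rw [hpj]
          exact mul_le_mul_of_nonneg_left
            (Real.rpow_le_rpow_of_nonpos hrN hrj (by linarith))
            (Real.rpow_nonneg (hr0 j).le _)
        calc ‖c j‖ * r j ^ x
            ≤ ‖c j‖ * (r j ^ Dl * r (Fin.last n) ^ (x - Dl)) :=
              mul_le_mul_of_nonneg_left this (norm_nonneg _)
          _ = ‖c j‖ * r j ^ Dl * r (Fin.last n) ^ (x - Dl) := by ring
    linarith
  · by_contra h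
    push_neg at h
    -- h : D < x
    have key : ∑ j, c j * (r j : ℂ) ^ ω = -1 := by linear_combination hω
    have h1 : (1:ℝ) ≤ ∑ j, ‖c j‖ * r j ^ x := by
      have := norm_sum_le Finset.univ (fun j => c j * (r j:ℂ) ^ ω)
      rw [key] at this
      simp only [norm_neg, norm_one] at this
      calc (1:ℝ) ≤ ∑ j, ‖c j * (r j:ℂ) ^ ω‖ := this
        _ = _ := by simp_rw [habs]
    have h2 : ∑ j, ‖c j‖ * r j ^ x < ∑ j, ‖c j‖ * r j ^ D := by
      refine Finset.sum_lt_sum (fun j _ => ?_) ⟨Fin.last n, Finset.mem_univ _, ?_⟩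
      · have : r j ^ x ≤ r j ^ D :=
          Real.rpow_le_rpow_of_exponent_ge (hr0 j) (hr1 j).le h.le
        exact mul_le_mul_of_nonneg_left this (norm_nonneg _)
      · exact mul_lt_mul_of_pos_left
          (Real.rpow_lt_rpow_of_exponent_gt (hr0 _) (hr1 _) h) hcNpos
    rw [hD] at h2
    linarith
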